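/- Let a > 0 and define g(β) = (a + 2β) / ( 2β·(1 − β/2)² ) for β ∈ (0, 2). Set c = −3a + √(a·(32 + 9a)). Then 0 < c/8 < 2, β = c/8 is the unique stationary point of g on (0, 2), g attains its global minimum over (0, 2) at β = c/8 with minimum value (4a + c) / ( c·(1 − c/16)² ), and g is nonincreasing on (0, c/8]. -/

import Mathlib

open Filter Topology Set

lemma asv_aux_hasDeriv (a β : ℝ) (h0 : 0 < β) (h2 : β < 2) :
    HasDerivAt (fun x : ℝ => (a + 2 * x) / (2 * x * (1 - x / 2) ^ 2))
      (2 * (1 - β / 2) * (2 * β ^ 2 + 3 * a / 2 * β - a) / (2 * β * (1 - β / 2) ^ 2) ^ 2) β := by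
  have h1 : HasDerivAt (fun x : ℝ => 1 - x / 2) (-(1/2)) β := by
    simpa using ((hasDerivAt_id β).div_const 2).const_sub 1
  have h2' : HasDerivAt (fun x : ℝ => (1 - x / 2) ^ 2) (2 * (1 - β/2) ^ 1 * (-(1/2))) β := by
    simpa using h1.fun_pow 2
  have h3 : HasDerivAt (fun x : ℝ => 2 * x) 2 β := by
    simpa using (hasDerivAt_id β).const_mul 2
  have hD : HasDerivAt (fun x : ℝ => 2 * x * (1 - x / 2) ^ 2)
      (2 * (1 - β/2) ^ 2 + 2 * β * (2 * (1 - β/2) ^ 1 * (-(1/2)))) β := h3.mul h2'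
  have hN : HasDerivAt (fun x : ℝ => a + 2 * x) 2 β := h3.const_add a
  have hpos : (0:ℝ) < 1 - β / 2 := by linarith
  have hDne : 2 * β * (1 - β / 2) ^ 2 ≠ 0 := by positivity
  have hdiv := hN.fun_div hD hDne
  convert hdiv using 2
  · rfl
  · rfl
  · ring

/-- Optimization of `g(β) = (a + 2β) / (2β (1 - β/2)²)` on `(0, 2)`:
with `c = -3a + √(a(32 + 9a))` one has `0 < c/8 < 2`, `β = c/8` is the unique
stationary point of `g` on `(0, 2)`, `g` attains its global minimum over
`(0, 2)` at `c/8` with value `(4a + c)/(c (1 - c/16)²)`, and `g` is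
nonincreasing on `(0, c/8]`. -/
theorem asv_bound_optimization
    (a : ℝ) (ha : 0 < a)
    (c : ℝ) (hc : c = -3 * a + Real.sqrt (a * (32 + 9 * a)))
    (g : ℝ → ℝ)
    (hg : ∀ β, g β = (a + 2 * β) / (2 * β * (1 - β / 2) ^ 2)) :
    0 < c / 8 ∧ c / 8 < 2 ∧
    deriv g (c / 8) = 0 ∧
    (∀ β ∈ Set.Ioo (0 : ℝ) 2, deriv g β = 0 → β = c / 8) ∧
    g (c / 8) = (4 * a + c) / (c * (1 - c / 16) ^ 2) ∧
    (∀ β ∈ Set.Ioo (0 : ℝ) 2, g (c / 8) ≤ g β) ∧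
    AntitoneOn g (Set.Ioc 0 (c / 8)) := by
  have hgfun : g = fun x : ℝ => (a + 2 * x) / (2 * x * (1 - x / 2) ^ 2) := funext hg
  have hann : (0:ℝ) ≤ a * (32 + 9 * a) := by nlinarith
  have hs2 : Real.sqrt (a * (32 + 9 * a)) ^ 2 = a * (32 + 9 * a) := Real.sq_sqrt hann
  have hsn : 0 ≤ Real.sqrt (a * (32 + 9 * a)) := Real.sqrt_nonneg _
  have hceq : c + 3 * a = Real.sqrt (a * (32 + 9 * a)) := by rw [hc]; ring
  have hcsq : (c + 3 * a) ^ 2 = a * (32 + 9 * a) := by rw [hceq]; exact hs2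
  -- p(c/8) = 0 where p(β) = 2β² + (3a/2)β - a, equivalently c² + 6ac - 32a = 0
  have hp8 : c ^ 2 + 6 * a * c - 32 * a = 0 := by nlinarith [hcsq]
  have hc0 : 0 < c := by nlinarith [hcsq, hsn, hceq]
  have hc16 : c < 16 := by nlinarith [hcsq, hsn, hceq]
  have h80 : 0 < c / 8 := by linarith
  have h82 : c / 8 < 2 := by linarith
  -- derivative formula on (0,2)
  have hderiv : ∀ β : ℝ, 0 < β → β < 2 →
      deriv g β = 2 * (1 - β / 2) * (2 * β ^ 2 + 3 * a / 2 * β - a)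
        / (2 * β * (1 - β / 2) ^ 2) ^ 2 := by
    intro β hb0 hb2
    rw [hgfun]
    exact (asv_aux_hasDeriv a β hb0 hb2).deriv
  have hdiff : ∀ β : ℝ, 0 < β → β < 2 → DifferentiableAt ℝ g β := by
    intro β hb0 hb2
    rw [hgfun]
    exact (asv_aux_hasDeriv a β hb0 hb2).differentiableAt
  -- p(x) < 0 for 0 < x < c/8, p(x) > 0 for c/8 < x
  have hplt : ∀ x : ℝ, 0 < x → x < c / 8 → 2 * x ^ 2 + 3 * a / 2 * x - a < 0 := by
    intro x hx0 hx
    have hprod : (x - c / 8) * (2 * x + c / 4 + 3 * a / 2) < 0 :=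
      mul_neg_of_neg_of_pos (by linarith) (by linarith)
    nlinarith [hp8, hprod]
  have hpgt : ∀ x : ℝ, c / 8 < x → 0 < 2 * x ^ 2 + 3 * a / 2 * x - a := by
    intro x hx
    have hprod : 0 < (x - c / 8) * (2 * x + c / 4 + 3 * a / 2) :=
      mul_pos (by linarith) (by linarith)
    nlinarith [hp8, hprod]
  -- deriv at c/8 is zero
  have hd8 : deriv g (c / 8) = 0 := by
    rw [hderiv (c / 8) h80 h82]
    have : 2 * (c / 8) ^ 2 + 3 * a / 2 * (c / 8) - a = 0 := by linarith [hp8]; 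
    rw [this]
    simp
  -- antitone on Ioc 0 (c/8)
  have hconts : ∀ s : Set ℝ, s ⊆ Set.Ioo (0:ℝ) 2 → ContinuousOn g s := by
    intro s hs x hx
    exact ((hdiff x (hs hx).1 (hs hx).2).continuousAt).continuousWithinAt
  have hanti : StrictAntiOn g (Set.Ioc 0 (c / 8)) := by
    apply strictAntiOn_of_deriv_neg (convex_Ioc 0 (c/8))
    · exact hconts _ (fun x hx => ⟨hx.1, lt_of_le_of_lt hx.2 h82⟩)
    · intro x hx
      rw [interior_Ioc] at hx
      rw [hderiv x hx.1 (lt_trans hx.2 h82)]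
      have h1 : (0:ℝ) < 1 - x / 2 := by
        have := lt_trans hx.2 h82; linarith
      have h2 := hplt x hx.1 hx.2
      have h3 : (0:ℝ) < (2 * x * (1 - x / 2) ^ 2) ^ 2 := by
        have := hx.1; positivity
      apply div_neg_of_neg_of_pos _ h3
      nlinarith
  have hmono : StrictMonoOn g (Set.Ico (c / 8) 2) := by
    apply strictMonoOn_of_deriv_pos (convex_Ico (c/8) 2)
    · exact hconts _ (fun x hx => ⟨lt_of_lt_of_le h80 hx.1, hx.2⟩)
    · intro x hx
      rw [interior_Ico] at hx
      have hx0 : 0 < x := lt_trans h80 hx.1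
      rw [hderiv x hx0 hx.2]
      have h1 : (0:ℝ) < 1 - x / 2 := by linarith [hx.2]
      have h2 := hpgt x hx.1
      have h3 : (0:ℝ) < (2 * x * (1 - x / 2) ^ 2) ^ 2 := by positivity
      apply div_pos _ h3
      nlinarith
  refine ⟨h80, h82, hd8, ?_, ?_, ?_, hanti.antitoneOn⟩
  · -- uniqueness of stationary point
    intro β hβ hdz
    rw [hderiv β hβ.1 hβ.2] at hdz
    have h1 : (0:ℝ) < 1 - β / 2 := by linarith [hβ.2]
    have h3 : ((2 * β * (1 - β / 2) ^ 2) ^ 2 : ℝ) ≠ 0 := by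
      have := hβ.1; positivity
    have hnum : 2 * (1 - β / 2) * (2 * β ^ 2 + 3 * a / 2 * β - a) = 0 :=
      (div_eq_zero_iff.mp hdz).resolve_right h3
    have hpz : 2 * β ^ 2 + 3 * a / 2 * β - a = 0 := by
      rcases mul_eq_zero.mp hnum with h | h
      · exfalso; nlinarith
      · exact h
    by_contra hne
    rcases lt_or_gt_of_ne hne with h | h
    · have := hplt β hβ.1 h; linarith
    · have := hpgt β h; linarith
  · -- value at c/8
    rw [hg]
    have h1 : (0:ℝ) < 1 - c / 16 := by linarith
    have hd1 : (0:ℝ) < 2 * (c / 8) * (1 - c / 8 / 2) ^ 2 := by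
      have : (0:ℝ) < 1 - c / 8 / 2 := by linarith
      positivity
    have hd2 : (0:ℝ) < c * (1 - c / 16) ^ 2 := by positivity
    rw [div_eq_div_iff (ne_of_gt hd1) (ne_of_gt hd2)]
    ring
  · -- global minimum
    intro β hβ
    rcases lt_trichotomy β (c / 8) with h | h | h
    · exact (hanti ⟨hβ.1, h.le⟩ ⟨h80, le_refl _⟩ h).le
    · rw [h]
    · exact (hmono ⟨le_refl _, h82⟩ ⟨h.le, hβ.2⟩ h).le
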